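/- arXiv:1402.0177 — 2 statements merged into one kernel-verified Lean document; each statement's English description precedes it below -/
import Mathlib

section
/- Let H be a connected non-bipartite graph with root v, and G a connected graph of order n ≥ 2. If v belongs to some local metric basis of H, then dim_l(G∘_v H) = n·(dim_l(H) − 1). -/
open SimpleGraph

/-- A set `S` is a local metric generator for `G` if every pair of adjacent
vertices is distinguished, by distance, by some element of `S`. -/
def IsLocalMetricGenerator {V : Type*} (G : SimpleGraph V) (S : Set V) : Prop :=
  ∀ ⦃u v : V⦄, G.Adj u v → ∃ w ∈ S, G.dist u w ≠ G.dist v w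

/-- The local metric dimension of a graph. -/
noncomputable def localMetricDim {V : Type*} [Fintype V] (G : SimpleGraph V) : ℕ :=
  sInf {k | ∃ S : Finset V, IsLocalMetricGenerator G ↑S ∧ S.card = k}

/-- A local metric basis: a local metric generator of minimum cardinality. -/
def IsLocalMetricBasis {V : Type*} [Fintype V] (G : SimpleGraph V) (S : Finset V) : Prop :=
  IsLocalMetricGenerator G ↑S ∧ S.card = localMetricDim G

/-- The rooted product G ∘_v H: a copy of H is attached at its root v to each
vertex of G. Vertex (g, v) plays the role of the g-th vertex of G. -/
def rootedProd {V W : Type*} (G : SimpleGraph V) (H : SimpleGraph W) (v : W) :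
    SimpleGraph (V × W) :=
  SimpleGraph.fromRel (fun a b =>
    (a.1 = b.1 ∧ H.Adj a.2 b.2) ∨ (a.2 = v ∧ b.2 = v ∧ G.Adj a.1 b.1))

namespace RootedAux

variable {V W : Type*} (G : SimpleGraph V) (H : SimpleGraph W) (v : W)

lemma rootedProd_adj {a b : V × W} :
    (rootedProd G H v).Adj a b ↔
      (a.1 = b.1 ∧ H.Adj a.2 b.2) ∨ (a.2 = v ∧ b.2 = v ∧ G.Adj a.1 b.1) := by
  simp only [rootedProd, fromRel_adj]
  constructor
  · rintro ⟨hne, (⟨h1, h2⟩ | ⟨h1, h2, h3⟩) | (⟨h1, h2⟩ | ⟨h1, h2, h3⟩)⟩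
    · exact Or.inl ⟨h1, h2⟩
    · exact Or.inr ⟨h1, h2, h3⟩
    · exact Or.inl ⟨h1.symm, h2.symm⟩
    · exact Or.inr ⟨h2, h1, h3.symm⟩
  · rintro (⟨h1, h2⟩ | ⟨h1, h2, h3⟩)
    · exact ⟨fun h => h2.ne (congrArg Prod.snd h), Or.inl (Or.inl ⟨h1, h2⟩)⟩
    · exact ⟨fun h => h3.ne (congrArg Prod.fst h), Or.inl (Or.inr ⟨h1, h2, h3⟩)⟩

def copyHom (g : V) : H →g rootedProd G H v :=
  ⟨fun w => (g, w), fun h => (rootedProd_adj G H v).mpr (Or.inl ⟨rfl, h⟩)⟩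

def rootHom : G →g rootedProd G H v :=
  ⟨fun g => (g, v), fun h => (rootedProd_adj G H v).mpr (Or.inr ⟨rfl, rfl, h⟩)⟩

noncomputable def D [DecidableEq V] (a b : V × W) : ℕ :=
  if a.1 = b.1 then H.dist a.2 b.2 else H.dist a.2 v + G.dist a.1 b.1 + H.dist v b.2

variable {G H} {v}

lemma rootedProd_connected (hG : G.Connected) (hH : H.Connected) :
    (rootedProd G H v).Connected := by
  have hVne : Nonempty V := hG.nonempty
  have hWne : Nonempty W := hH.nonempty
  rw [connected_iff]
  refine ⟨fun a b => ?_, ⟨(Classical.arbitrary V, Classical.arbitrary W)⟩⟩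
  have h1 : (rootedProd G H v).Reachable (a.1, a.2) (a.1, v) :=
    (hH.preconnected a.2 v).map (copyHom G H v a.1)
  have h2 : (rootedProd G H v).Reachable (a.1, v) (b.1, v) :=
    (hG.preconnected a.1 b.1).map (rootHom G H v)
  have h3 : (rootedProd G H v).Reachable (b.1, v) (b.1, b.2) :=
    (hH.preconnected v b.2).map (copyHom G H v b.1)
  exact (h1.trans h2).trans h3

lemma dist_le_D [DecidableEq V] (hG : G.Connected) (hH : H.Connected) (a b : V × W) :
    (rootedProd G H v).dist a b ≤ D G H v a b := by
  unfold D
  split_ifs with h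
  · obtain ⟨p, hp⟩ := hH.exists_walk_length_eq_dist a.2 b.2
    have : (rootedProd G H v).dist (a.1, a.2) (a.1, b.2) ≤ H.dist a.2 b.2 := by
      rw [← hp]
      have h' : (rootedProd G H v).dist (a.1, a.2) (a.1, b.2) ≤ (p.map (copyHom G H v a.1)).length :=
        dist_le (p.map (copyHom G H v a.1))
      simpa using h'
    obtain ⟨a1, a2⟩ := a; obtain ⟨b1, b2⟩ := b
    simp only at h; subst h; exact this
  · obtain ⟨p1, hp1⟩ := hH.exists_walk_length_eq_dist a.2 v
    obtain ⟨p2, hp2⟩ := hG.exists_walk_length_eq_dist a.1 b.1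
    obtain ⟨p3, hp3⟩ := hH.exists_walk_length_eq_dist v b.2
    have hle := dist_le (((p1.map (copyHom G H v a.1)).append (p2.map (rootHom G H v))).append
      (p3.map (copyHom G H v b.1)))
    have e := Walk.length_append ((p1.map (copyHom G H v a.1)).append (p2.map (rootHom G H v)))
      (p3.map (copyHom G H v b.1))
    have e2 := Walk.length_append (p1.map (copyHom G H v a.1)) (p2.map (rootHom G H v))
    simp only [e, e2, Walk.length_map (copyHom G H v a.1) p1, Walk.length_map (rootHom G H v) p2,
      Walk.length_map (copyHom G H v b.1) p3, hp1, hp2, hp3] at hle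
    replace hle : (rootedProd G H v).dist a b ≤ H.dist a.2 v + G.dist a.1 b.1 + H.dist v b.2 :=
      hle.trans_eq (by
        rw [← hp2, ← hp3]
        exact congrArg₂ (· + ·) (congrArg _ (Walk.length_map _ _)) (Walk.length_map _ _))
    simpa using hle

lemma D_root [DecidableEq V] (hG : G.Connected) (g g'' : V) (z : W) :
    D G H v (g, v) (g'', z) = G.dist g g'' + H.dist v z := by
  unfold D
  split_ifs with h
  · subst h; simp
  · simp

lemma D_step [DecidableEq V] (hG : G.Connected) (hH : H.Connected)
    {a b : V × W} (hab : (rootedProd G H v).Adj a b) (c : V × W) :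
    D G H v a c ≤ D G H v b c + 1 := by
  rcases (rootedProd_adj G H v).mp hab with ⟨h1, h2⟩ | ⟨h1, h2, h3⟩
  · obtain ⟨g, x⟩ := a; obtain ⟨g', y⟩ := b
    simp only at h1 h2; subst h1
    have hxy : H.dist x y = 1 := dist_eq_one_iff_adj.mpr h2
    unfold D
    dsimp only
    split_ifs with h
    · have := hH.dist_triangle (u := x) (v := y) (w := c.2)
      omega
    · have := hH.dist_triangle (u := x) (v := y) (w := v)
      omega
  · obtain ⟨g, x⟩ := a; obtain ⟨g', y⟩ := b
    simp only at h1 h2 h3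
    rw [h1, h2]
    have hgg : G.dist g g' = 1 := dist_eq_one_iff_adj.mpr h3
    rw [D_root hG, D_root hG]
    have := hG.dist_triangle (u := g) (v := g') (w := c.1)
    omega

lemma D_le_length [DecidableEq V] (hG : G.Connected) (hH : H.Connected)
    {a b : V × W} (p : (rootedProd G H v).Walk a b) :
    D G H v a b ≤ p.length := by
  induction p with
  | nil => simp [D]
  | cons h p ih =>
    simp only [Walk.length_cons]
    rename_i u m w
    have h1 := D_step (v := v) hG hH h w
    omega

lemma dist_eq_D [DecidableEq V] (hG : G.Connected) (hH : H.Connected) (a b : V × W) :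
    (rootedProd G H v).dist a b = D G H v a b := by
  refine le_antisymm (dist_le_D hG hH a b) ?_
  obtain ⟨p, hp⟩ := (rootedProd_connected hG hH).exists_walk_length_eq_dist a b
  rw [← hp]
  exact D_le_length hG hH p

lemma dist_same [DecidableEq V] (hG : G.Connected) (hH : H.Connected) (g : V) (x y : W) :
    (rootedProd G H v).dist (g, x) (g, y) = H.dist x y := by
  rw [dist_eq_D hG hH]; simp [D]

lemma dist_cross [DecidableEq V] (hG : G.Connected) (hH : H.Connected) {g g' : V}
    (hgg : g ≠ g') (x y : W) :
    (rootedProd G H v).dist (g, x) (g', y) = H.dist x v + G.dist g g' + H.dist v y := by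
  rw [dist_eq_D hG hH]; simp [D, hgg]

end RootedAux

namespace RootedAux

variable {V : Type*} [Fintype V] {G : SimpleGraph V}

lemma univ_gen : IsLocalMetricGenerator G (↑(Finset.univ : Finset V)) := by
  intro u w h
  refine ⟨u, by simp, ?_⟩
  rw [dist_self, dist_comm, dist_eq_one_iff_adj.mpr h]
  simp

lemma dim_le_card_of_gen {S : Finset V} (hS : IsLocalMetricGenerator G ↑S) :
    localMetricDim G ≤ S.card :=
  Nat.sInf_le ⟨S, hS, rfl⟩

lemma exists_basis (G : SimpleGraph V) : ∃ B : Finset V, IsLocalMetricBasis G B := by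
  have hne : {k | ∃ S : Finset V, IsLocalMetricGenerator G ↑S ∧ S.card = k}.Nonempty :=
    ⟨_, Finset.univ, univ_gen, rfl⟩
  obtain ⟨S, hS, hcard⟩ := Nat.sInf_mem hne
  exact ⟨S, hS, hcard⟩

lemma two_le_dim (hG : G.Connected) (hnb : ¬ G.Colorable 2) : 2 ≤ localMetricDim G := by
  by_contra hlt
  push_neg at hlt
  obtain ⟨B, ⟨hBgen, hBcard⟩⟩ := exists_basis G
  interval_cases h : localMetricDim G
  · have hedge : ∃ x y, G.Adj x y := by
      by_contra hne
      push_neg at hne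
      exact hnb ⟨⟨fun _ => 0, fun {x y} hadj => absurd hadj (hne x y)⟩⟩
    obtain ⟨x, y, hxy⟩ := hedge
    obtain ⟨w, hw, -⟩ := hBgen hxy
    simp [Finset.card_eq_zero.mp hBcard] at hw
  · obtain ⟨w, hBw⟩ := Finset.card_eq_one.mp hBcard
    refine hnb ⟨⟨fun x => ⟨G.dist x w % 2, Nat.mod_lt _ (by norm_num)⟩, ?_⟩⟩
    intro x y hadj heq
    obtain ⟨z, hz, hne⟩ := hBgen hadj
    rw [hBw] at hz
    simp only [Finset.coe_singleton, Set.mem_singleton_iff] at hz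
    subst hz
    have h1 : G.dist x y = 1 := dist_eq_one_iff_adj.mpr hadj
    have t1 := hG.dist_triangle (u := x) (v := y) (w := z)
    have t2 := hG.dist_triangle (u := y) (v := x) (w := z)
    rw [G.dist_comm (u := y) (v := x)] at t2
    have : G.dist x z % 2 = G.dist y z % 2 := congrArg (·.1) heq
    omega

end RootedAux

open RootedAux in
/-- If the root v belongs to some local metric basis of the connected non-bipartite
graph H, then dim_l(G ∘_v H) = n · (dim_l(H) - 1). -/
theorem localMetricDim_rootedProd_of_root_mem {V W : Type*} [Fintype V] [Fintype W]
    (G : SimpleGraph V) (H : SimpleGraph W) (v : W) (hG : G.Connected) (hH : H.Connected)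
    (hnb : ¬ H.Colorable 2) (hn : 2 ≤ Fintype.card V)
    (hv : ∃ B : Finset W, IsLocalMetricBasis H B ∧ v ∈ B) :
    localMetricDim (rootedProd G H v) = Fintype.card V * (localMetricDim H - 1) := by
  classical
  obtain ⟨B, ⟨hBgen, hBcard⟩, hvB⟩ := hv
  have h2 : 2 ≤ localMetricDim H := two_le_dim hH hnb
  have hBe_card : (B.erase v).card = localMetricDim H - 1 := by
    rw [Finset.card_erase_of_mem hvB, hBcard]
  have hBe_ne : (B.erase v).Nonempty := by
    rw [← Finset.card_pos, hBe_card]; omega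
  obtain ⟨b0, hb0⟩ := hBe_ne
  have hb0B : b0 ∈ B := Finset.mem_of_mem_erase hb0
  have hb0v : b0 ≠ v := Finset.ne_of_mem_erase hb0
  refine le_antisymm ?_ ?_
  · -- upper bound
    have hTgen : IsLocalMetricGenerator (rootedProd G H v)
        ↑((Finset.univ : Finset V) ×ˢ (B.erase v)) := by
      intro a b hab
      rcases (rootedProd_adj G H v).mp hab with ⟨h1, h2'⟩ | ⟨h1, h2', h3⟩
      · -- intra-copy edge
        obtain ⟨g, x⟩ := a; obtain ⟨g', y⟩ := b
        simp only at h1 h2'; subst h1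
        obtain ⟨w, hwB, hwne⟩ := hBgen h2'
        by_cases hwv : w = v
        · rw [hwv] at hwne
          obtain ⟨g', hg'⟩ := Fintype.exists_ne_of_one_lt_card (by omega) g
          refine ⟨(g', b0), by simp [hb0B, hb0v], ?_⟩
          rw [dist_cross hG hH (Ne.symm hg'), dist_cross hG hH (Ne.symm hg')]
          omega
        · refine ⟨(g, w), by simp [Finset.mem_erase, hwv, hwB], ?_⟩
          rw [dist_same hG hH, dist_same hG hH]
          exact hwne
      · -- cross edge
        obtain ⟨g, x⟩ := a; obtain ⟨g', y⟩ := b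
        simp only at h1 h2' h3
        have hgg : g ≠ g' := h3.ne
        rw [h1, h2']
        refine ⟨(g, b0), by simp [hb0B, hb0v], ?_⟩
        rw [dist_same hG hH, dist_cross hG hH (Ne.symm hgg)]
        have hpos : 0 < G.dist g' g := hG.pos_dist_of_ne (Ne.symm hgg)
        omega
    have := dim_le_card_of_gen hTgen
    rwa [Finset.card_product, Finset.card_univ, hBe_card] at this
  · -- lower bound
    obtain ⟨S, hSgen, hScard⟩ := exists_basis (rootedProd G H v)
    rw [← hScard]
    have key : ∀ g : V, localMetricDim H - 1 ≤
        ((S.filter (fun a => a.1 = g)).image Prod.snd).card := by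
      intro g
      set Sg := (S.filter (fun a => a.1 = g)).image Prod.snd with hSg
      have hgen : IsLocalMetricGenerator H ↑(insert v Sg) := by
        intro x y hxy
        have hedge : (rootedProd G H v).Adj (g, x) (g, y) :=
          (rootedProd_adj G H v).mpr (Or.inl ⟨rfl, hxy⟩)
        obtain ⟨⟨g', z⟩, hwS, hwne⟩ := hSgen hedge
        by_cases hg' : g' = g
        · subst hg'
          refine ⟨z, by
            simp only [Finset.coe_insert, Set.mem_insert_iff]
            exact Or.inr (by
              simp only [hSg, Finset.coe_image, Set.mem_image, Finset.mem_coe,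
                Finset.mem_filter]
              exact ⟨(g', z), ⟨hwS, rfl⟩, rfl⟩), ?_⟩
          rwa [dist_same hG hH, dist_same hG hH] at hwne
        · refine ⟨v, by simp, ?_⟩
          rw [dist_cross hG hH (fun h => hg' h.symm),
            dist_cross hG hH (fun h => hg' h.symm)] at hwne
          omega
      have hdim : localMetricDim H ≤ (insert v Sg).card := dim_le_card_of_gen hgen
      have := Finset.card_insert_le v Sg
      omega
    have hsum : S.card = ∑ g : V, (S.filter (fun a => a.1 = g)).card :=
      Finset.card_eq_sum_card_fiberwise (fun a _ => Finset.mem_univ a.1)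
    have hfib : ∀ g : V, (S.filter (fun a => a.1 = g)).card =
        ((S.filter (fun a => a.1 = g)).image Prod.snd).card := by
      intro g
      rw [Finset.card_image_of_injOn]
      intro a ha b hb hab
      simp only [Finset.mem_coe, Finset.mem_filter] at ha hb
      exact Prod.ext (ha.2.trans hb.2.symm) hab
    calc Fintype.card V * (localMetricDim H - 1)
        = ∑ _g : V, (localMetricDim H - 1) := by
          rw [Finset.sum_const, Finset.card_univ, smul_eq_mul]
      _ ≤ ∑ g : V, ((S.filter (fun a => a.1 = g)).image Prod.snd).card :=
          Finset.sum_le_sum (fun g _ => key g)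
      _ = ∑ g : V, (S.filter (fun a => a.1 = g)).card := by
          exact Finset.sum_congr rfl (fun g _ => (hfib g).symm)
      _ = S.card := hsum.symm
end

section
/- Let G be a connected graph of order n ≥ 2, H a connected non-bipartite non-complete graph of order n′, and v ∈ V(H). Then dim_l(G∘_v H) ≤ n(n′−3). -/
open SimpleGraph

section Aux
variable {V W : Type*} {G : SimpleGraph V} {H : SimpleGraph W} {v : W}

lemma rootedProd_adj {p q : V × W} :
    (rootedProd G H v).Adj p q ↔
      (p.1 = q.1 ∧ H.Adj p.2 q.2) ∨ (p.2 = v ∧ q.2 = v ∧ G.Adj p.1 q.1) := by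
  simp only [rootedProd, fromRel_adj]
  constructor
  · rintro ⟨hne, (⟨h1, h2⟩ | ⟨h1, h2, h3⟩) | (⟨h1, h2⟩ | ⟨h1, h2, h3⟩)⟩
    · exact Or.inl ⟨h1, h2⟩
    · exact Or.inr ⟨h1, h2, h3⟩
    · exact Or.inl ⟨h1.symm, h2.symm⟩
    · exact Or.inr ⟨h2, h1, h3.symm⟩
  · rintro (⟨h1, h2⟩ | ⟨h1, h2, h3⟩)
    · exact ⟨fun h => h2.ne (by rw [h]), Or.inl (Or.inl ⟨h1, h2⟩)⟩
    · exact ⟨fun h => h3.ne (by rw [h]), Or.inl (Or.inr ⟨h1, h2, h3⟩)⟩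

def copyHom (G : SimpleGraph V) (H : SimpleGraph W) (v : W) (g : V) :
    H →g rootedProd G H v where
  toFun z := (g, z)
  map_rel' := fun h => rootedProd_adj.mpr (Or.inl ⟨rfl, h⟩)

def rootHom (G : SimpleGraph V) (H : SimpleGraph W) (v : W) :
    G →g rootedProd G H v where
  toFun g := (g, v)
  map_rel' := fun h => rootedProd_adj.mpr (Or.inr ⟨rfl, rfl, h⟩)

lemma rootedProd_connected (hG : G.Connected) (hH : H.Connected) :
    (rootedProd G H v).Connected := by
  have hV : Nonempty V := hG.nonempty
  have hW : Nonempty W := hH.nonempty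
  constructor
  rintro ⟨g, x⟩ ⟨g', y⟩
  have r1 : (rootedProd G H v).Reachable (g, x) (g, v) :=
    (hH.preconnected x v).map (copyHom G H v g)
  have r2 : (rootedProd G H v).Reachable (g, v) (g', v) :=
    (hG.preconnected g g').map (rootHom G H v)
  have r3 : (rootedProd G H v).Reachable (g', v) (g', y) :=
    (hH.preconnected v y).map (copyHom G H v g')
  exact (r1.trans r2).trans r3

lemma lip_le_dist {α : Type*} {R : SimpleGraph α} (f : α → ℤ)
    (hf : ∀ a b : α, R.Adj a b → |f a - f b| ≤ 1) {p q : α} (h : R.Reachable p q) :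
    f p - f q ≤ R.dist p q := by
  obtain ⟨w, hw⟩ := h.exists_walk_length_eq_dist
  rw [← hw]
  clear hw
  induction w with
  | nil => simp
  | @cons u m q h2 w ih =>
      have h1 : |f u - f m| ≤ 1 := hf _ _ h2
      have h3 : f u - f m ≤ 1 := (abs_le.mp h1).2
      have ih' := ih ⟨w⟩
      simp only [Walk.length_cons]
      push_cast
      linarith

end Aux

section Dist
variable {V W : Type*} {G : SimpleGraph V} {H : SimpleGraph W} {v : W}

lemma rootedProd_dist_same [DecidableEq V] (hG : G.Connected) (hH : H.Connected)
    (g : V) (x y : W) :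
    (rootedProd G H v).dist (g, x) (g, y) = H.dist x y := by
  refine le_antisymm ?_ ?_
  · obtain ⟨p, hp⟩ := hH.exists_walk_length_eq_dist x y
    have := SimpleGraph.dist_le (p.map (copyHom G H v g))
    rwa [Walk.length_map, hp] at this
  · have hr : (rootedProd G H v).Reachable (g, x) (g, y) :=
      (rootedProd_connected hG hH).preconnected _ _
    have key := lip_le_dist
      (fun pz => if pz.1 = g then (H.dist pz.2 y : ℤ) else (H.dist v y : ℤ) + 1) ?_ hr
    · simp only [if_pos rfl, SimpleGraph.dist_self, Nat.cast_zero, sub_zero, if_true] at key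
      exact_mod_cast key
    · rintro ⟨h1, z1⟩ ⟨h2, z2⟩ hab
      rcases rootedProd_adj.mp hab with ⟨he, hadj⟩ | ⟨he1, he2, hadj⟩
      · simp only at he hadj
        subst he
        by_cases hg : h1 = g
        · simp only [if_pos hg]
          have t1 : H.dist z1 y ≤ H.dist z1 z2 + H.dist z2 y := hH.dist_triangle
          have t2 : H.dist z2 y ≤ H.dist z2 z1 + H.dist z1 y := hH.dist_triangle
          have d1 : H.dist z1 z2 = 1 := dist_eq_one_iff_adj.mpr hadj
          have d2 : H.dist z2 z1 = 1 := dist_eq_one_iff_adj.mpr hadj.symm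
          rw [abs_le]
          omega
        · simp only [if_neg hg]
          simp
      · simp only at he1 he2 hadj
        subst he1; subst he2
        have hne : h1 ≠ h2 := hadj.ne
        by_cases hg1 : h1 = g <;> by_cases hg2 : h2 = g
        · exact absurd (hg1.trans hg2.symm) hne
        · simp only [if_pos hg1, if_neg hg2]
          rw [abs_le]; omega
        · simp only [if_neg hg1, if_pos hg2]
          rw [abs_le]; omega
        · simp only [if_neg hg1, if_neg hg2]
          simp

lemma rootedProd_dist_cross [DecidableEq V] (hG : G.Connected) (hH : H.Connected)
    {g g' : V} (hgg : g ≠ g') (x y : W) :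
    (rootedProd G H v).dist (g, x) (g', y) = H.dist x v + G.dist g g' + H.dist v y := by
  refine le_antisymm ?_ ?_
  · obtain ⟨p1, hp1⟩ := hH.exists_walk_length_eq_dist x v
    obtain ⟨p2, hp2⟩ := hG.exists_walk_length_eq_dist g g'
    obtain ⟨p3, hp3⟩ := hH.exists_walk_length_eq_dist v y
    obtain ⟨w1, hw1⟩ : ∃ w : (rootedProd G H v).Walk (g, x) (g, v), w.length = H.dist x v :=
      ⟨p1.map (copyHom G H v g), (Walk.length_map _ _).trans hp1⟩
    obtain ⟨w2, hw2⟩ : ∃ w : (rootedProd G H v).Walk (g, v) (g', v), w.length = G.dist g g' :=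
      ⟨p2.map (rootHom G H v), (Walk.length_map _ _).trans hp2⟩
    obtain ⟨w3, hw3⟩ : ∃ w : (rootedProd G H v).Walk (g', v) (g', y), w.length = H.dist v y :=
      ⟨p3.map (copyHom G H v g'), (Walk.length_map _ _).trans hp3⟩
    have := SimpleGraph.dist_le (w1.append (w2.append w3))
    rw [Walk.length_append, Walk.length_append, hw1, hw2, hw3] at this
    omega
  · have hr : (rootedProd G H v).Reachable (g, x) (g', y) :=
      (rootedProd_connected hG hH).preconnected _ _
    have key := lip_le_dist
      (fun pz => if pz.1 = g then (H.dist pz.2 v : ℤ) + G.dist g g' + H.dist v y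
        else (G.dist pz.1 g' : ℤ) + H.dist v y - H.dist v pz.2) ?_ hr
    · simp only [if_pos rfl, if_neg (Ne.symm hgg)] at key
      rw [SimpleGraph.dist_self] at key
      push_cast at key
      have : ((H.dist x v : ℤ) + G.dist g g' + H.dist v y : ℤ) ≤
          ((rootedProd G H v).dist (g, x) (g', y) : ℤ) := by linarith
      exact_mod_cast this
    · rintro ⟨h1, z1⟩ ⟨h2, z2⟩ hab
      rcases rootedProd_adj.mp hab with ⟨he, hadj⟩ | ⟨he1, he2, hadj⟩
      · simp only at he hadj
        subst he
        have t1 : H.dist z1 v ≤ H.dist z1 z2 + H.dist z2 v := hH.dist_triangle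
        have t2 : H.dist z2 v ≤ H.dist z2 z1 + H.dist z1 v := hH.dist_triangle
        have t3 : H.dist v z1 ≤ H.dist v z2 + H.dist z2 z1 := hH.dist_triangle
        have t4 : H.dist v z2 ≤ H.dist v z1 + H.dist z1 z2 := hH.dist_triangle
        have d1 : H.dist z1 z2 = 1 := dist_eq_one_iff_adj.mpr hadj
        have d2 : H.dist z2 z1 = 1 := dist_eq_one_iff_adj.mpr hadj.symm
        by_cases hg : h1 = g
        · simp only [if_pos hg]
          rw [abs_le]; constructor <;> push_cast <;> omega
        · simp only [if_neg hg]
          rw [abs_le]; constructor <;> push_cast <;> omega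
      · simp only at he1 he2 hadj
        have hne : h1 ≠ h2 := hadj.ne
        have t1 : G.dist h1 g' ≤ G.dist h1 h2 + G.dist h2 g' := hG.dist_triangle
        have t2 : G.dist h2 g' ≤ G.dist h2 h1 + G.dist h1 g' := hG.dist_triangle
        have d1 : G.dist h1 h2 = 1 := dist_eq_one_iff_adj.mpr hadj
        have d2 : G.dist h2 h1 = 1 := dist_eq_one_iff_adj.mpr hadj.symm
        by_cases hg1 : h1 = g <;> by_cases hg2 : h2 = g
        · exact absurd (hg1.trans hg2.symm) hne
        · simp only [if_pos hg1, if_neg hg2, he1, he2, SimpleGraph.dist_self, hg1]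
          rw [abs_le]; constructor <;> push_cast <;> simp only [hg1] at d1 d2 t1 t2 ⊢ <;> omega
        · simp only [if_neg hg1, if_pos hg2, he1, he2, SimpleGraph.dist_self, hg2]
          rw [abs_le]; constructor <;> push_cast <;> simp only [hg2] at d1 d2 t1 t2 ⊢ <;> omega
        · simp only [if_neg hg1, if_neg hg2, he1, he2, SimpleGraph.dist_self]
          rw [abs_le]; constructor <;> push_cast <;> omega
end Dist

section Comb
variable {W : Type*} {H : SimpleGraph W} {v : W}

lemma exists_nonadj (hnc : H ≠ ⊤) : ∃ x y : W, x ≠ y ∧ ¬ H.Adj x y := by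
  by_contra h
  push_neg at h
  apply hnc
  ext x y
  simp only [top_adj]
  exact ⟨fun ha => ha.ne, fun hne => h x y hne⟩

lemma four_le_card (hH : H.Connected) (hnb : ¬ H.Colorable 2) (hnc : H ≠ ⊤) [Fintype W] :
    4 ≤ Fintype.card W := by
  classical
  by_contra hlt
  push_neg at hlt
  have h3 : Fintype.card W ≤ 3 := by omega
  have hge : 3 ≤ Fintype.card W := by
    by_contra h2
    push_neg at h2
    exact hnb ((H.colorable_of_fintype).mono (by omega))
  have hcard : Fintype.card W = 3 := le_antisymm h3 hge
  obtain ⟨x, y, hxy, hna⟩ := exists_nonadj hnc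
  refine hnb ⟨Coloring.mk (fun z => if z = x ∨ z = y then 0 else 1) ?_⟩
  intro a b hab heq
  by_cases ha : a = x ∨ a = y <;> by_cases hb : b = x ∨ b = y
  · rcases ha with rfl | rfl <;> rcases hb with rfl | rfl
    · exact hab.ne rfl
    · exact hna hab
    · exact hna hab.symm
    · exact hab.ne rfl
  · simp [if_pos ha, if_neg hb] at heq
  · simp [if_neg ha, if_pos hb] at heq
  · push_neg at ha hb
    have huniv : ({x, y, a} : Finset W) = Finset.univ := by
      apply Finset.eq_univ_of_card
      rw [hcard]
      rw [Finset.card_insert_of_notMem (by simp [hxy, Ne.symm ha.1]), 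
        Finset.card_insert_of_notMem (by simp [Ne.symm ha.2])]
      simp
    have : b ∈ ({x, y, a} : Finset W) := huniv ▸ Finset.mem_univ b
    simp only [Finset.mem_insert, Finset.mem_singleton] at this
    rcases this with rfl | rfl | rfl
    · exact hb.1 rfl
    · exact hb.2 rfl
    · exact hab.ne rfl

lemma exists_ab (hH : H.Connected) (hnc : H ≠ ⊤) (v : W) :
    ∃ a b : W, a ≠ v ∧ b ≠ v ∧ a ≠ b ∧ (¬ H.Adj a b ∨ H.dist a v ≠ H.dist b v) := by
  obtain ⟨x, y, hxy, hna⟩ := exists_nonadj hnc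
  have key : ∀ z : W, z ≠ v → ¬ H.Adj v z →
      ∃ a b : W, a ≠ v ∧ b ≠ v ∧ a ≠ b ∧ (¬ H.Adj a b ∨ H.dist a v ≠ H.dist b v) := by
    intro z hz hnaz
    obtain ⟨p⟩ := hH.preconnected v z
    cases p with
    | nil => exact absurd rfl (Ne.symm hz)
    | cons hadj p' =>
      rename_i b
      have hbv : b ≠ v := hadj.ne'
      have hbz : z ≠ b := fun h => hnaz (h ▸ hadj)
      refine ⟨z, b, hz, hbv, hbz, Or.inr ?_⟩
      have hdb : H.dist b v = 1 := dist_eq_one_iff_adj.mpr hadj.symm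
      have hdz0 : H.dist z v ≠ 0 :=
        dist_ne_zero_iff_ne_and_reachable.mpr ⟨hz, hH.preconnected z v⟩
      have hdz1 : H.dist z v ≠ 1 := fun h => hnaz (dist_eq_one_iff_adj.mp h).symm
      omega
  by_cases hx : x = v
  · exact key y (hx ▸ hxy.symm) (hx ▸ hna)
  · by_cases hy : y = v
    · exact key x (hy ▸ hxy) (fun h => hna (hy ▸ h.symm))
    · exact ⟨x, y, hx, hy, hxy, Or.inl hna⟩

end Comb

/-- If H is connected, non-bipartite and non-complete of order n', then
dim_l(G ∘_v H) ≤ n(n' - 3). -/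
theorem localMetricDim_rootedProd_le_of_not_complete {V W : Type*} [Fintype V] [Fintype W]
    (G : SimpleGraph V) (H : SimpleGraph W) (v : W) (hG : G.Connected) (hH : H.Connected)
    (hnb : ¬ H.Colorable 2) (hn : 2 ≤ Fintype.card V) (hnc : H ≠ ⊤) :
    localMetricDim (rootedProd G H v) ≤ Fintype.card V * (Fintype.card W - 3) := by
  classical
  have h4 := four_le_card hH hnb hnc
  obtain ⟨a, b, hav, hbv, hab, hw⟩ := exists_ab hH hnc v
  set T : Finset W := ({v, a, b} : Finset W)ᶜ with hT
  have hTcard : T.card = Fintype.card W - 3 := by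
    rw [hT, Finset.card_compl]
    congr 1
    rw [Finset.card_insert_of_notMem (by simp [Ne.symm hav, Ne.symm hbv]),
      Finset.card_insert_of_notMem (by simp [hab]), Finset.card_singleton]
  have hTne : T.Nonempty := Finset.card_pos.mp (by omega)
  obtain ⟨c, hc⟩ := hTne
  set S : Finset (V × W) := Finset.univ ×ˢ T with hS
  have hmemS : ∀ (g0 : V) (z : W), z ∈ T → ((g0, z) : V × W) ∈ (↑S : Set (V × W)) :=
    fun g0 z hz => Finset.mem_coe.mpr (Finset.mem_product.mpr ⟨Finset.mem_univ _, hz⟩)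
  have hgen : IsLocalMetricGenerator (rootedProd G H v) ↑S := by
    rintro ⟨g, x⟩ ⟨g', y⟩ hadj
    rcases rootedProd_adj.mp hadj with ⟨h1, hxy⟩ | ⟨hx, hy, hg⟩
    · simp only at h1 hxy
      subst h1
      by_cases hxT : x ∈ T
      · refine ⟨(g, x), hmemS g x hxT, ?_⟩
        rw [SimpleGraph.dist_self, rootedProd_dist_same hG hH]
        exact fun h =>
          (dist_ne_zero_iff_ne_and_reachable.mpr ⟨hxy.ne', hH.preconnected y x⟩) h.symm
      · by_cases hyT : y ∈ T
        · refine ⟨(g, y), hmemS g y hyT, ?_⟩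
          rw [rootedProd_dist_same hG hH, SimpleGraph.dist_self]
          exact dist_ne_zero_iff_ne_and_reachable.mpr ⟨hxy.ne, hH.preconnected x y⟩
        · have hxm : x = v ∨ x = a ∨ x = b := by
            by_contra hcon
            push_neg at hcon
            exact hxT (Finset.mem_compl.mpr (by simp [hcon.1, hcon.2.1, hcon.2.2]))
          have hym : y = v ∨ y = a ∨ y = b := by
            by_contra hcon
            push_neg at hcon
            exact hyT (Finset.mem_compl.mpr (by simp [hcon.1, hcon.2.1, hcon.2.2]))
          have hne : H.dist x v ≠ H.dist y v := by
            have hda : H.dist a v ≠ 0 :=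
              dist_ne_zero_iff_ne_and_reachable.mpr ⟨hav, hH.preconnected a v⟩
            have hdb : H.dist b v ≠ 0 :=
              dist_ne_zero_iff_ne_and_reachable.mpr ⟨hbv, hH.preconnected b v⟩
            have hvv : H.dist v v = 0 := SimpleGraph.dist_self
            rcases hxm with rfl | rfl | rfl <;> rcases hym with rfl | rfl | rfl <;>
              first
              | exact absurd hxy (H.irrefl)
              | omega
              | (rcases hw with hna | hd
                 · first
                   | exact absurd hxy hna
                   | exact absurd hxy.symm hna
                 · omega)
          obtain ⟨g'', hg''⟩ := Fintype.exists_ne_of_one_lt_card (by omega) g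
          refine ⟨(g'', c), hmemS g'' c hc, ?_⟩
          rw [rootedProd_dist_cross hG hH (Ne.symm hg''),
            rootedProd_dist_cross hG hH (Ne.symm hg'')]
          omega
    · simp only at hx hy hg
      refine ⟨(g, c), hmemS g c hc, ?_⟩
      rw [hx, hy, rootedProd_dist_same hG hH, rootedProd_dist_cross hG hH hg.ne']
      have hd1 : G.dist g' g = 1 := dist_eq_one_iff_adj.mpr hg.symm
      have hvv : H.dist v v = 0 := SimpleGraph.dist_self
      omega
  have hmem : S.card ∈ {k | ∃ S' : Finset (V × W),
      IsLocalMetricGenerator (rootedProd G H v) ↑S' ∧ S'.card = k} := ⟨S, hgen, rfl⟩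
  have hle := Nat.sInf_le hmem
  rw [localMetricDim]
  calc sInf {k | ∃ S' : Finset (V × W),
        IsLocalMetricGenerator (rootedProd G H v) ↑S' ∧ S'.card = k} ≤ S.card := hle
    _ = Fintype.card V * (Fintype.card W - 3) := by
        rw [hS, Finset.card_product, Finset.card_univ, hTcard]
end
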